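/- Let X be a normal variety over a field of characteristic p > 0 and D an effective Cartier divisor with canonical section s. If X admits a D-splitting ψ : F^r_* O_X(D) → O_X (an O_X-linear map with f ↦ ψ(f s) a splitting of the r-th iterated Frobenius), then for every positive integer n, setting 𝐧 = p^{r(n-1)} + p^{r(n-2)} + ⋯ + 1, the variety X admits an 𝐧D-splitting, defined inductively by ψ¹ = ψ and ψⁿ(f σ^𝐧) = ψ(ψ^{n-1}(f σ^{𝐧-1}) σ). -/
import Mathlib


/-- iterating a `D`-splitting.  We work on a (normal, i.e. integrally
closed) affine piece where the effective Cartier divisor `D` is principal, defined by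
`d ∈ A`; the invertible sheaf `O_X(D)` is trivialized by `d⁻¹`, under which a
`D`-splitting `ψ : F^r_* O_X(D) → O_X` becomes an additive map `ψ : A → A` that is
`p^r`-semilinear (`ψ(a^{p^r} x) = a ψ(x)`) and satisfies `ψ(d) = 1` (the splitting
condition `ψ(f s)∘(F^r)^# = id`, `s` being the canonical section of `O_X(D)`).
Then for every positive integer `n`, with `𝐧 = p^{r(n-1)} + ⋯ + p^r + 1`, the `n`-fold
iterate `ψⁿ` (given inductively by `ψ¹ = ψ` and `ψⁿ(f σ^𝐧) = ψ(ψ^{n-1}(f σ^{𝐧-1}) σ)`,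
i.e. `ψⁿ = ψ ∘ ψ^{n-1}` in the trivialization) is an `𝐧D`-splitting: it is additive,
`p^{rn}`-semilinear, and sends `d^𝐧` to `1`. -/
theorem iterated_divisor_splitting
    (p : ℕ) (hp : p.Prime)
    (A : Type*) [CommRing A] [IsDomain A] [IsIntegrallyClosed A] [CharP A p]
    (r : ℕ) (hr : 0 < r)
    (d : A)
    (ψ : A → A)
    (hadd : ∀ x y : A, ψ (x + y) = ψ x + ψ y)
    (hsemilinear : ∀ a x : A, ψ (a ^ p ^ r * x) = a * ψ x)
    (hsplit : ψ d = 1) :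
    ∀ n : ℕ, 0 < n →
      (∀ x y : A, ψ^[n] (x + y) = ψ^[n] x + ψ^[n] y) ∧
      (∀ a x : A, ψ^[n] (a ^ p ^ (r * n) * x) = a * ψ^[n] x) ∧
      ψ^[n] (d ^ (∑ i ∈ Finset.range n, p ^ (r * i))) = 1 := by
  intro n hn
  induction n with
  | zero => exact absurd hn (lt_irrefl 0)
  | succ n ih =>
    rcases Nat.eq_zero_or_pos n with hn0 | hn0
    · subst hn0
      refine ⟨fun x y => by simpa using hadd x y,
        fun a x => by simpa using hsemilinear a x, by simpa using hsplit⟩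
    · obtain ⟨ih1, ih2, ih3⟩ := ih hn0
      refine ⟨?_, ?_, ?_⟩
      · intro x y
        rw [Function.iterate_succ_apply, Function.iterate_succ_apply,
          Function.iterate_succ_apply, hadd, ih1]
      · intro a x
        rw [Function.iterate_succ_apply, Function.iterate_succ_apply]
        have : a ^ p ^ (r * (n + 1)) = (a ^ p ^ (r * n)) ^ p ^ r := by
          rw [← pow_mul, ← pow_add, Nat.mul_succ]
        rw [this, hsemilinear, ih2]
      · have hsum : (∑ i ∈ Finset.range (n + 1), p ^ (r * i))
            = p ^ r * (∑ i ∈ Finset.range n, p ^ (r * i)) + 1 := by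
          rw [Finset.sum_range_succ', Finset.mul_sum]
          simp [pow_succ, pow_add, Nat.mul_succ, mul_comm]
        rw [Function.iterate_succ_apply, hsum, pow_add, pow_one, pow_mul',
          hsemilinear, hsplit, mul_one, ih3]
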